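/- For all m ∈ ℕ^d with d ≥ 1, the Lebesgue constant of the polyhedral set Γ̄^{(m)} = {γ ∈ ℕ₀^d : γ_i/m_i ≤ 1 for all i, and γ_i/m_i + γ_j/m_j ≤ 1 for all i ≠ j} satisfies L(Γ̄^{(m)}) ≥ (2π)^{-d} ∏_{i=1}^d ln(m_i + 1). -/

import Mathlib

set_option maxHeartbeats 1000000

open scoped Classical

/-- The Lebesgue constant of a finite set `Γ ⊂ ℤ^d` linked to partial Fourier sums. -/
noncomputable def FL {d : ℕ} (Γ : Finset (Fin d → ℤ)) : ℝ :=
  (2 * Real.pi)⁻¹ ^ d *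
    ∫ t : Fin d → ℝ in Set.univ.pi fun _ => Set.Ico (-Real.pi) Real.pi,
      ‖∑ γ ∈ Γ, Complex.exp (Complex.I * ((∑ i, (γ i : ℝ) * t i : ℝ) : ℂ))‖

/-- The polyhedral set `Γ̄^{(m)}` from the paper. -/
noncomputable def GammaBar (d : ℕ) (m : Fin d → ℕ) : Finset (Fin d → ℤ) :=
  ((Fintype.piFinset fun i => Finset.range (m i + 1)).filter
      (fun γ => ∀ i j, i ≠ j → (γ i : ℝ) / (m i) + (γ j : ℝ) / (m j) ≤ 1)).image
    (fun γ i => (γ i : ℤ))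

noncomputable section AuxStmt8

open MeasureTheory Finset



def muC : ℝ := Real.log 2 / (2 * Real.pi)
def nuC : ℝ := 1 - muC

lemma pi_pos' : (0:ℝ) < Real.pi := Real.pi_pos

lemma muC_nonneg : 0 ≤ muC := div_nonneg (Real.log_nonneg one_le_two) (by positivity)

lemma log_two_le_one : Real.log 2 ≤ 1 := by
  have := Real.log_le_sub_one_of_pos (x := 2) (by norm_num)
  linarith

lemma muC_le_half : muC ≤ 1/2 := by
  rw [muC, div_le_iff₀ (by positivity)]
  nlinarith [Real.pi_gt_three, log_two_le_one]

lemma nuC_nonneg : 0 ≤ nuC := by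
  have := muC_le_half; simp only [nuC]; linarith

lemma nuC_le_one : nuC ≤ 1 := by
  have := muC_nonneg; simp only [nuC]; linarith

lemma one_le_two_nuC : 1 ≤ 2 * nuC := by
  have := muC_le_half; simp only [nuC]; linarith

/-- The test function. -/
def gfun : ℝ → ℂ := fun t =>
  (muC : ℂ) - Complex.I * (nuC : ℂ) *
    ((if 0 ≤ t then ((Real.pi - t)/Real.pi : ℝ) else (-((Real.pi + t)/Real.pi) : ℝ) : ℝ) : ℂ)

lemma gfun_measurable : Measurable gfun := by
  apply Measurable.sub measurable_const
  apply Measurable.mul measurable_const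
  apply Complex.measurable_ofReal.comp
  exact Measurable.ite (measurableSet_le measurable_const measurable_id)
    (by fun_prop) (by fun_prop)

lemma gfun_norm_le {t : ℝ} (h : t ∈ Set.Icc (-Real.pi) Real.pi) : ‖gfun t‖ ≤ 1 := by
  obtain ⟨h1, h2⟩ := h
  have hπ := pi_pos'
  set w : ℝ := (if 0 ≤ t then ((Real.pi - t)/Real.pi : ℝ) else (-((Real.pi + t)/Real.pi) : ℝ)) with hw
  have hw1 : |w| ≤ 1 := by
    rw [abs_le]
    constructor <;> rw [hw] <;> split <;> rename_i h0
    · rw [le_div_iff₀ hπ]; nlinarith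
    · rw [neg_le_neg_iff, div_le_one hπ]; push_neg at h0; nlinarith
    · rw [div_le_one hπ]; nlinarith
    · have hp : 0 ≤ (Real.pi + t)/Real.pi := div_nonneg (by linarith) hπ.le
      linarith
  have hre : (gfun t).re = muC := by simp [gfun, ← hw]
  have him : (gfun t).im = -(nuC * w) := by simp [gfun, ← hw]
  calc ‖gfun t‖ ≤ |(gfun t).re| + |(gfun t).im| := Complex.norm_le_abs_re_add_abs_im _
    _ ≤ 1 := by
        rw [hre, him, abs_neg, abs_mul, abs_of_nonneg muC_nonneg, abs_of_nonneg nuC_nonneg]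
        have h3 : nuC * |w| ≤ nuC * 1 := mul_le_mul_of_nonneg_left hw1 nuC_nonneg
        have := muC_nonneg
        simp only [nuC] at h3 ⊢
        linarith

/-- The Fourier coefficients sequence. -/
def cseq : ℕ → ℝ := fun k => if k = 0 then 2 * Real.pi * muC else 2 * nuC / k

lemma cseq_nonneg (k : ℕ) : 0 ≤ cseq k := by
  rw [cseq]
  split
  · have := muC_nonneg; positivity
  · have := nuC_nonneg; positivity

lemma log_le_harmonic (n : ℕ) : Real.log (n+1) ≤ ∑ k ∈ Finset.range n, (1:ℝ)/(k+1) := by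
  induction n with
  | zero => simp
  | succ n ih =>
      rw [Finset.sum_range_succ]
      have key : Real.log (n+1+1) - Real.log (n+1) ≤ 1/(n+1) := by
        rw [← Real.log_div (by positivity) (by positivity)]
        have := Real.log_le_sub_one_of_pos (x := ((n:ℝ)+1+1)/((n:ℝ)+1)) (by positivity)
        have h2 : ((n:ℝ)+1+1)/((n:ℝ)+1) - 1 = 1/((n:ℝ)+1) := by field_simp; ring
        linarith [this, h2.le]
      push_cast
      push_cast at ih
      linarith

lemma log_le_sum_cseq (M : ℕ) (hM : 1 ≤ M) :
    Real.log (M+1) ≤ ∑ k ∈ Finset.range (M/2+1), cseq k := by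
  have e0 : cseq 0 = 2*Real.pi*muC := by simp [cseq]
  have es : ∑ k ∈ Finset.range (M/2), cseq (k+1) = ∑ k ∈ Finset.range (M/2), 2*nuC/((k:ℝ)+1) := by
    apply Finset.sum_congr rfl
    intro k _
    simp only [cseq, Nat.succ_ne_zero, if_false]
    push_cast
    ring
  have h1 : ∑ k ∈ Finset.range (M/2+1), cseq k
      = 2*Real.pi*muC + ∑ k ∈ Finset.range (M/2), 2*nuC/((k:ℝ)+1) := by
    rw [Finset.sum_range_succ' cseq (M/2), e0, es]
    ring
  have h2 : (2:ℝ)*Real.pi*muC = Real.log 2 := by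
    rw [muC]; field_simp
  have h3 : ∑ k ∈ Finset.range (M/2), 2*nuC/((k:ℝ)+1)
      = 2*nuC * ∑ k ∈ Finset.range (M/2), (1:ℝ)/(k+1) := by
    rw [Finset.mul_sum]
    apply Finset.sum_congr rfl
    intro k _
    field_simp
  have h4 : Real.log ((M/2 : ℕ) + 1) ≤ ∑ k ∈ Finset.range (M/2), (1:ℝ)/(k+1) :=
    log_le_harmonic (M/2)
  have h5 : Real.log (M+1) ≤ Real.log 2 + Real.log ((M/2 : ℕ) + 1) := by
    rw [← Real.log_mul (by norm_num) (ne_of_gt (by positivity))]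
    refine Real.log_le_log (by positivity) ?_
    have h : M + 1 ≤ 2 * (M/2 + 1) := by omega
    calc (M:ℝ) + 1 ≤ ((2 * (M/2+1) : ℕ) : ℝ) := by exact_mod_cast h
      _ = 2 * ((M/2 : ℕ) + 1) := by push_cast; ring
  have h6 : 0 ≤ Real.log ((M/2 : ℕ) + 1) := Real.log_nonneg (by linarith [Nat.cast_nonneg (α := ℝ) (M/2)])
  have h7 : Real.log ((M/2:ℕ)+1) ≤ 2*nuC * ∑ k ∈ Finset.range (M/2), (1:ℝ)/(k+1) := by
    calc Real.log ((M/2:ℕ)+1) = 1 * Real.log ((M/2:ℕ)+1) := by ring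
    _ ≤ (2*nuC) * Real.log ((M/2:ℕ)+1) := mul_le_mul_of_nonneg_right one_le_two_nuC h6
    _ ≤ (2*nuC) * ∑ k ∈ Finset.range (M/2), (1:ℝ)/(k+1) := by
        apply mul_le_mul_of_nonneg_left h4
        have := nuC_nonneg; positivity
  rw [h1, h2, h3]
  linarith

lemma hasDerivAt_F (k : ℕ) (hk : k ≠ 0) (a b : ℂ) (t : ℝ) :
    HasDerivAt (fun s : ℝ => Complex.exp (Complex.I * k * s) *
        ((a + b * s)/(Complex.I * k) + b / (k:ℂ)^2))
      (Complex.exp (Complex.I * k * t) * (a + b * t)) t := by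
  have hkC : (k:ℂ) ≠ 0 := Nat.cast_ne_zero.mpr hk
  have key : ∀ z : ℂ, HasDerivAt (fun z : ℂ => Complex.exp (Complex.I * k * z) *
      ((a + b * z)/(Complex.I * k) + b / (k:ℂ)^2))
      (Complex.exp (Complex.I * k * z) * (a + b * z)) z := by
    intro z
    have h1 : HasDerivAt (fun z : ℂ => Complex.I * k * z) (Complex.I * k) z := by
      simpa using (hasDerivAt_id z).const_mul (Complex.I * (k:ℂ))
    have h2 := h1.cexp
    have h3 : HasDerivAt (fun z : ℂ => (a + b * z)/(Complex.I * k) + b / (k:ℂ)^2)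
        (b / (Complex.I * k)) z := by
      have : HasDerivAt (fun z : ℂ => a + b * z) b z := by
        simpa using ((hasDerivAt_id z).const_mul b).const_add a
      simpa using (this.div_const (Complex.I * k)).add_const (b / (k:ℂ)^2)
    have h4 : HasDerivAt (fun z : ℂ => Complex.exp (Complex.I * k * z) * ((a + b * z)/(Complex.I * k) + b / (k:ℂ)^2)) _ z := h2.mul h3
    convert h4 using 1
    have hI : Complex.I * (k:ℂ) ≠ 0 := mul_ne_zero Complex.I_ne_zero hkC
    field_simp
    ring_nf
    have h3 : Complex.I ^ 3 = -Complex.I := by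
      rw [pow_succ, Complex.I_sq]; ring
    rw [Complex.I_sq]
    ring
  exact (key t).comp_ofReal

lemma integral_exp_linear (k : ℕ) (hk : k ≠ 0) (a b : ℂ) (l r : ℝ) :
    ∫ t in l..r, Complex.exp (Complex.I * k * t) * (a + b * t)
      = Complex.exp (Complex.I*k*r) * ((a + b*r)/(Complex.I*k) + b/(k:ℂ)^2)
        - Complex.exp (Complex.I*k*l) * ((a + b*l)/(Complex.I*k) + b/(k:ℂ)^2) := by
  apply intervalIntegral.integral_eq_sub_of_hasDerivAt
  · intro t _; exact hasDerivAt_F k hk a b t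
  · apply Continuous.intervalIntegrable
    apply Continuous.mul
    · exact Complex.continuous_exp.comp (by continuity)
    · continuity

lemma integral_linear (a b : ℂ) (l r : ℝ) :
    ∫ t in l..r, (a + b * t) = (r - l) • a + b * ((r:ℂ)^2 - (l:ℂ)^2) / 2 := by
  have h1 : ∫ t in l..r, (a + b * t)
      = (∫ t in l..r, a) + ∫ t in l..r, b * (t:ℂ) := by
    apply intervalIntegral.integral_add
    · exact intervalIntegrable_const
    · apply Continuous.intervalIntegrable; continuity
  rw [h1, intervalIntegral.integral_const, intervalIntegral.integral_const_mul]
  have h2 : ∫ t in l..r, (t:ℂ) = (((∫ t in l..r, t : ℝ)) : ℂ) := by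
    rw [← intervalIntegral.integral_ofReal]
  rw [h2, integral_id]
  push_cast
  ring
lemma oneD (k : ℕ) :
    (∫ t in Set.Ico (-Real.pi) Real.pi, Complex.exp (Complex.I * k * t) * gfun t)
      = (cseq k : ℂ) := by
  have hπ := pi_pos'
  have hπne : (Real.pi : ℂ) ≠ 0 := by exact_mod_cast ne_of_gt hπ
  set b : ℂ := Complex.I * (nuC:ℂ) / (Real.pi:ℂ) with hb
  set ap : ℂ := (muC:ℂ) - Complex.I * (nuC:ℂ) with hap
  set am : ℂ := (muC:ℂ) + Complex.I * (nuC:ℂ) with ham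
  have hgp : ∀ t:ℝ, 0 ≤ t → gfun t = ap + b * t := by
    intro t ht
    rw [gfun]
    simp only [if_pos ht]
    rw [hap, hb]
    push_cast
    field_simp
    ring
  have hgm : ∀ t:ℝ, t < 0 → gfun t = am + b * t := by
    intro t ht
    rw [gfun]
    simp only [if_neg (not_le.mpr ht)]
    rw [ham, hb]
    push_cast
    field_simp
    ring
  set f : ℝ → ℂ := fun t => Complex.exp (Complex.I * k * t) * gfun t with hf
  set fp : ℝ → ℂ := fun t => Complex.exp (Complex.I * k * t) * (ap + b * t) with hfp
  set fm : ℝ → ℂ := fun t => Complex.exp (Complex.I * k * t) * (am + b * t) with hfm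
  have hfmc : Continuous fm := by
    apply Continuous.mul
    · exact Complex.continuous_exp.comp (by continuity)
    · continuity
  have hfpc : Continuous fp := by
    apply Continuous.mul
    · exact Complex.continuous_exp.comp (by continuity)
    · continuity
  have h0ae : ∀ᵐ (x:ℝ) ∂(volume : Measure ℝ), x ≠ 0 := by
    have hs : {x : ℝ | ¬ x ≠ 0} = {0} := by ext x; simp
    rw [ae_iff, hs]; exact measure_singleton 0
  have haem : ∀ᵐ x ∂(volume : Measure ℝ), x ∈ Set.uIoc (-Real.pi) 0 → f x = fm x := by
    filter_upwards [h0ae] with x hx hmem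
    rw [Set.uIoc_of_le (by linarith)] at hmem
    have hxlt : x < 0 := lt_of_le_of_ne hmem.2 hx
    simp only [hf, hfm]
    rw [hgm x hxlt]
  have heqp : Set.EqOn f fp (Set.uIcc 0 Real.pi) := by
    intro x hx
    rw [Set.uIcc_of_le hπ.le] at hx
    simp only [hf, hfp]
    rw [hgp x hx.1]
  have hintm : IntervalIntegrable f volume (-Real.pi) 0 := by
    apply (hfmc.intervalIntegrable _ _).congr_ae
    filter_upwards [ae_restrict_of_ae haem, ae_restrict_mem measurableSet_uIoc] with x h1 h2
    exact (h1 h2).symm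
  have hintp : IntervalIntegrable f volume 0 Real.pi := by
    apply (hfpc.intervalIntegrable _ _).congr_ae
    filter_upwards [ae_restrict_mem measurableSet_uIoc] with x hx
    have hx' : x ∈ Set.uIcc 0 Real.pi := by
      rw [Set.uIoc_of_le hπ.le] at hx
      rw [Set.uIcc_of_le hπ.le]
      exact ⟨hx.1.le, hx.2⟩
    exact (heqp hx').symm
  have split : ∫ t in (-Real.pi)..Real.pi, f t
      = (∫ t in (-Real.pi)..0, f t) + ∫ t in (0:ℝ)..Real.pi, f t :=
    (intervalIntegral.integral_add_adjacent_intervals hintm hintp).symm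
  have em : ∫ t in (-Real.pi)..0, f t = ∫ t in (-Real.pi)..0, fm t :=
    intervalIntegral.integral_congr_ae haem
  have ep : ∫ t in (0:ℝ)..Real.pi, f t = ∫ t in (0:ℝ)..Real.pi, fp t :=
    intervalIntegral.integral_congr heqp
  have hIco : (∫ t in Set.Ico (-Real.pi) Real.pi, f t) = ∫ t in (-Real.pi)..Real.pi, f t := by
    rw [MeasureTheory.integral_Ico_eq_integral_Ioo, ← MeasureTheory.integral_Ioc_eq_integral_Ioo,
        ← intervalIntegral.integral_of_le (by linarith)]
  show (∫ t in Set.Ico (-Real.pi) Real.pi, f t) = (cseq k : ℂ)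
  rw [hIco, split, em, ep]
  by_cases hk : k = 0
  · subst hk
    have e1 : ∫ t in (-Real.pi)..(0:ℝ), fm t = ∫ t in (-Real.pi)..(0:ℝ), (am + b * t) := by
      apply intervalIntegral.integral_congr; intro x _; simp [hfm]
    have e2 : ∫ t in (0:ℝ)..Real.pi, fp t = ∫ t in (0:ℝ)..Real.pi, (ap + b * t) := by
      apply intervalIntegral.integral_congr; intro x _; simp [hfp]
    rw [e1, e2, integral_linear, integral_linear]
    rw [cseq]
    simp only [if_pos rfl]
    rw [ham, hap, hb]
    push_cast
    simp only [Complex.real_smul]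
    push_cast
    field_simp
    ring
  · rw [integral_exp_linear k hk am b, integral_exp_linear k hk ap b]
    have hkC : (k:ℂ) ≠ 0 := Nat.cast_ne_zero.mpr hk
    have hE : Complex.exp (Complex.I * k * ((Real.pi:ℝ):ℂ))
        = Complex.exp (Complex.I * k * ((-Real.pi:ℝ):ℂ)) := by
      have h1 : Complex.I * (k:ℂ) * ((Real.pi:ℝ):ℂ)
          = Complex.I * (k:ℂ) * ((-Real.pi:ℝ):ℂ) + ((k:ℤ):ℂ) * (2 * (Real.pi:ℂ) * Complex.I) := by
        push_cast; ring
      rw [h1, Complex.exp_add, Complex.exp_int_mul_two_pi_mul_I, mul_one]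
    rw [hE]
    rw [cseq]
    simp only [if_neg hk]
    have hm2 : ap + b * ((Real.pi:ℝ):ℂ) = (muC:ℂ) := by
      rw [hap, hb, div_mul_cancel₀ _ hπne]; ring
    have hm1 : am + b * ((-Real.pi:ℝ):ℂ) = (muC:ℂ) := by
      rw [ham, hb, Complex.ofReal_neg, mul_neg, div_mul_cancel₀ _ hπne]; ring
    rw [hm1, hm2]
    have hdiff : am = ap + 2 * Complex.I * (nuC:ℂ) := by rw [ham, hap]; ring
    rw [hdiff]
    have hz : ((0:ℝ):ℂ) = 0 := by norm_num
    rw [hz]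
    simp only [mul_zero, Complex.exp_zero, add_zero, one_mul]
    push_cast
    field_simp [hkC, Complex.I_ne_zero]
    ring

def Bset : Set ℝ := Set.Ico (-Real.pi) Real.pi

lemma Bset_meas : MeasurableSet Bset := measurableSet_Ico

def cube (d : ℕ) : Set (Fin d → ℝ) := Set.univ.pi fun _ => Bset

lemma cube_meas (d : ℕ) : MeasurableSet (cube d) :=
  MeasurableSet.univ_pi fun _ => Bset_meas

/-- 1D factor function. -/
def Ffac (n : ℕ) : ℝ → ℂ := fun s => Complex.exp (Complex.I * n * s) * gfun s

lemma Ffac_meas (n : ℕ) : Measurable (Ffac n) := by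
  apply Measurable.mul
  · exact Complex.measurable_exp.comp (by fun_prop)
  · exact gfun_measurable

lemma Ffac_norm_le {n : ℕ} {s : ℝ} (hs : s ∈ Set.Icc (-Real.pi) Real.pi) :
    ‖Ffac n s‖ ≤ 1 := by
  rw [Ffac, norm_mul]
  have h1 : ‖Complex.exp (Complex.I * n * s)‖ = 1 := by
    rw [Complex.norm_exp]
    have : (Complex.I * n * s).re = 0 := by simp
    rw [this, Real.exp_zero]
  rw [h1, one_mul]
  exact gfun_norm_le hs

lemma fubini_step (d : ℕ) (x : Fin d → ℕ) :
    (∫ t in cube d, ∏ i, Ffac (x i) (t i)) = ∏ i, (cseq (x i) : ℂ) := by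
  rw [← MeasureTheory.integral_indicator (cube_meas d)]
  have hpt : ∀ t : Fin d → ℝ,
      (cube d).indicator (fun t => ∏ i, Ffac (x i) (t i)) t
        = ∏ i, (Bset.indicator (Ffac (x i))) (t i) := by
    intro t
    by_cases ht : t ∈ cube d
    · rw [Set.indicator_of_mem ht]
      have hti : ∀ i, t i ∈ Bset := fun i => ht i (Set.mem_univ i)
      exact Finset.prod_congr rfl fun i _ => (Set.indicator_of_mem (hti i) _).symm
    · rw [Set.indicator_of_notMem ht]
      rw [cube, Set.mem_univ_pi] at ht
      push_neg at ht
      obtain ⟨i, hi⟩ := ht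
      refine (Finset.prod_eq_zero (Finset.mem_univ i) ?_).symm
      rw [Set.indicator_of_notMem hi]
  simp_rw [hpt]
  rw [MeasureTheory.integral_fintype_prod_volume_eq_prod (ι := Fin d)
    (f := fun i s => Bset.indicator (Ffac (x i)) s)]
  refine Finset.prod_congr rfl fun i _ => ?_
  rw [MeasureTheory.integral_indicator Bset_meas]
  exact oneD (x i)

lemma cube_finite (d : ℕ) : IsFiniteMeasure (volume.restrict (cube d)) := by
  constructor
  rw [Measure.restrict_apply_univ, cube, volume_pi_pi, Bset]
  simp only [Real.volume_Ico]
  exact ENNReal.prod_lt_top fun i _ => ENNReal.ofReal_lt_top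

lemma prodFac_integrableOn (d : ℕ) (x : Fin d → ℕ) :
    IntegrableOn (fun t : Fin d → ℝ => ∏ i, Ffac (x i) (t i)) (cube d) := by
  haveI := cube_finite d
  have hmeas : Measurable (fun t : Fin d → ℝ => ∏ i, Ffac (x i) (t i)) :=
    Finset.measurable_prod _ fun i _ => (Ffac_meas (x i)).comp (measurable_pi_apply i)
  apply Integrable.mono' (integrable_const (1:ℝ)) hmeas.aestronglyMeasurable
  filter_upwards [ae_restrict_mem (cube_meas d)] with t ht
  rw [norm_prod]
  apply Finset.prod_le_one
  · intro i _; exact norm_nonneg _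
  · intro i _
    have hti : t i ∈ Bset := ht i (Set.mem_univ i)
    exact Ffac_norm_le ⟨hti.1, hti.2.le⟩

theorem stmt_8 (d : ℕ) (hd : 1 ≤ d) (m : Fin d → ℕ) (hm : ∀ i, 1 ≤ m i) :
    (2 * Real.pi)⁻¹ ^ d * ∏ i, Real.log (m i + 1) ≤ FL (GammaBar d m) := by
  have hπ := pi_pos'
  unfold FL
  apply mul_le_mul_of_nonneg_left ?_ (by positivity)
  set S : (Fin d → ℝ) → ℂ := fun t => ∑ γ ∈ GammaBar d m,
      Complex.exp (Complex.I * ((∑ i, (γ i : ℝ) * t i : ℝ) : ℂ)) with hS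
  show ∏ i, Real.log (m i + 1) ≤ ∫ t in cube d, ‖S t‖
  set Φ : Finset (Fin d → ℕ) := (Fintype.piFinset fun i => Finset.range (m i + 1)).filter
      (fun γ => ∀ i j, i ≠ j → (γ i : ℝ) / (m i) + (γ j : ℝ) / (m j) ≤ 1) with hΦ
  set T : ℝ := ∑ x ∈ Φ, ∏ i, cseq (x i) with hT
  have hGB : GammaBar d m = Φ.image (fun γ i => (γ i : ℤ)) := by
    rw [GammaBar, hΦ]
  -- continuity of S
  have hScont : Continuous S := by
    rw [hS]
    apply continuous_finset_sum
    intro γ _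
    apply Complex.continuous_exp.comp
    apply Continuous.mul continuous_const
    apply Complex.continuous_ofReal.comp
    apply continuous_finset_sum
    intro i _
    exact continuous_const.mul (continuous_apply i)
  have hAbsInt : IntegrableOn (fun t => ‖S t‖) (cube d) := by
    have hK : IsCompact (Set.univ.pi fun _ : Fin d => Set.Icc (-Real.pi) Real.pi) :=
      isCompact_univ_pi fun i => isCompact_Icc
    have hsub : cube d ⊆ Set.univ.pi fun _ : Fin d => Set.Icc (-Real.pi) Real.pi :=
      Set.pi_mono fun i _ => Set.Ico_subset_Icc_self
    exact ((continuous_norm.comp hScont).continuousOn.integrableOn_compact hK).mono_set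
      hsub
  -- key integral identity
  have keyInt : (∫ t in cube d, S t * ∏ i, gfun (t i)) = (T : ℂ) := by
    have hinj : ∀ x ∈ Φ, ∀ y ∈ Φ,
        (fun i => ((x i : ℤ))) = (fun i => ((y i : ℤ))) → x = y := by
      intro x _ y _ h
      funext i
      exact_mod_cast congrFun h i
    have hSx : ∀ t : Fin d → ℝ, S t * ∏ i, gfun (t i) = ∑ x ∈ Φ, ∏ i, Ffac (x i) (t i) := by
      intro t
      simp only [hS, hGB]
      rw [Finset.sum_image hinj, Finset.sum_mul]
      refine Finset.sum_congr rfl fun x hx => ?_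
      have hcast : ((∑ i, (((x i : ℤ) : ℝ)) * t i : ℝ) : ℂ) = ∑ i, (x i : ℂ) * (t i : ℂ) := by
        push_cast
        rfl
      rw [hcast, Finset.mul_sum, Complex.exp_sum, ← Finset.prod_mul_distrib]
      refine Finset.prod_congr rfl fun i _ => ?_
      rw [Ffac, ← mul_assoc]
    calc ∫ t in cube d, S t * ∏ i, gfun (t i)
        = ∫ t in cube d, ∑ x ∈ Φ, ∏ i, Ffac (x i) (t i) := by simp_rw [hSx]
      _ = ∑ x ∈ Φ, ∫ t in cube d, ∏ i, Ffac (x i) (t i) :=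
          integral_finset_sum Φ fun x _ => prodFac_integrableOn d x
      _ = ∑ x ∈ Φ, ∏ i, (cseq (x i) : ℂ) := Finset.sum_congr rfl fun x _ => fubini_step d x
      _ = (T : ℂ) := by rw [hT]; push_cast; rfl
  -- lower bound for T
  have c1 : ∏ i, Real.log (m i + 1) ≤ T := by
    have hHB : (Fintype.piFinset fun i => Finset.range (m i / 2 + 1)) ⊆ Φ := by
      intro x hx
      rw [hΦ, Finset.mem_filter]
      have hxle : ∀ l, x l ≤ m l / 2 := by
        intro l
        have := Fintype.mem_piFinset.mp hx l
        rw [Finset.mem_range] at this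
        omega
      constructor
      · rw [Fintype.mem_piFinset]
        intro i
        rw [Finset.mem_range]
        have := hxle i
        omega
      · intro i j hij
        have key : ∀ l : Fin d, (x l : ℝ) / (m l) ≤ 1/2 := by
          intro l
          have hml : (0:ℝ) < m l := by exact_mod_cast (hm l)
          have h2 : (x l : ℝ) ≤ (m l : ℝ)/2 := by
            calc (x l : ℝ) ≤ ((m l / 2 : ℕ) : ℝ) := by exact_mod_cast hxle l
              _ ≤ (m l : ℝ)/2 := by exact_mod_cast Nat.cast_div_le
          rw [div_le_div_iff₀ hml (by norm_num)]
          linarith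
        have hi := key i
        have hj := key j
        linarith
    calc ∏ i, Real.log (m i + 1)
        ≤ ∏ i, ∑ k ∈ Finset.range (m i / 2 + 1), cseq k := by
          apply Finset.prod_le_prod
          · intro i _
            apply Real.log_nonneg
            have : (0:ℝ) ≤ (m i : ℝ) := Nat.cast_nonneg _
            linarith
          · intro i _
            exact log_le_sum_cseq (m i) (hm i)
      _ = ∑ x ∈ Fintype.piFinset (fun i => Finset.range (m i / 2 + 1)), ∏ i, cseq (x i) :=
          Finset.prod_univ_sum _ _
      _ ≤ T := by
          rw [hT]
          exact Finset.sum_le_sum_of_subset_of_nonneg hHB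
            fun x _ _ => Finset.prod_nonneg fun i _ => cseq_nonneg _
  -- upper bound chain
  have c2 : T ≤ ∫ t in cube d, ‖S t‖ := by
    have h1 : T ≤ ‖∫ t in cube d, S t * ∏ i, gfun (t i)‖ := by
      rw [keyInt, Complex.norm_real, Real.norm_eq_abs]
      exact le_abs_self T
    have h2 : ‖∫ t in cube d, S t * ∏ i, gfun (t i)‖
        ≤ ∫ t in cube d, ‖S t * ∏ i, gfun (t i)‖ := by
      exact norm_integral_le_integral_norm _
    have h3 : (∫ t in cube d, ‖S t * ∏ i, gfun (t i)‖) ≤ ∫ t in cube d, ‖S t‖ := by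
      apply integral_mono_of_nonneg
      · exact Filter.Eventually.of_forall fun t => norm_nonneg _
      · exact hAbsInt
      · filter_upwards [ae_restrict_mem (cube_meas d)] with t ht
        have hG : ‖∏ i, gfun (t i)‖ ≤ 1 := by
          rw [norm_prod]
          apply Finset.prod_le_one
          · intro i _; exact norm_nonneg _
          · intro i _
            have hti := ht i (Set.mem_univ i)
            exact gfun_norm_le ⟨hti.1, hti.2.le⟩
        calc ‖S t * ∏ i, gfun (t i)‖ = ‖S t‖ * ‖∏ i, gfun (t i)‖ := norm_mul _ _
          _ ≤ ‖S t‖ * 1 := mul_le_mul_of_nonneg_left hG (norm_nonneg _)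
          _ = ‖S t‖ := by rw [mul_one]
    linarith
  linarith


end AuxStmt8
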